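/- For all natural numbers m and all h with 0 ≤ h ≤ 2^m, the sequence γ satisfies the symmetry γ(h, m) = γ(2^m − h, m). -/

import Mathlib

/-- The recursively defined quantity `γ(h, m)` bounding the soundness of the
Iterated Swap Tree: `γ(0,m) = γ(1,m) = 1`, `γ(h,0) = 0` for `h ≥ 2`, and
`γ(h, m) = ∑_{k=0}^{⌊h/2⌋} γ(k, m-1) γ(h-k, m-1)` for `h ≥ 2`, `m ≥ 1`. -/
def gamma : ℕ → ℕ → ℚ
  | 0, _ => 1
  | 1, _ => 1
  | _ + 2, 0 => 0
  | h + 2, m + 1 => ∑ k ∈ Finset.range ((h + 2) / 2 + 1), gamma k m * gamma (h + 2 - k) m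
  termination_by h m => m


lemma gamma_zero (m : ℕ) : gamma 0 m = 1 := by rw [gamma]

lemma gamma_one (m : ℕ) : gamma 1 m = 1 := by rw [gamma]

lemma gamma_two_zero (t : ℕ) : gamma (t+2) 0 = 0 := by rw [gamma]

lemma gamma_add_two (t m : ℕ) : gamma (t+2) (m+1)
    = ∑ k ∈ Finset.range ((t + 2) / 2 + 1), gamma k m * gamma (t + 2 - k) m := by
  rw [gamma]

lemma gamma_vanish (m : ℕ) : ∀ h, 2^m < h → gamma h m = 0 := by
  induction m with
  | zero =>
    intro h hh
    match h, hh with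
    | (t+2), _ => exact gamma_two_zero t
  | succ m ih =>
    intro h hh
    have hn : (0:ℕ) < 2^m := Nat.pow_pos (by norm_num)
    have h2 : 2^(m+1) = 2*2^m := by ring
    obtain ⟨t, rfl⟩ : ∃ t, h = t+2 := ⟨h-2, by omega⟩
    rw [gamma_add_two]
    apply Finset.sum_eq_zero
    intro k hk
    rw [Finset.mem_range] at hk
    rw [ih (t+2-k) (by omega), mul_zero]

/-- The symmetry `γ(h, m) = γ(2^m − h, m)` for `0 ≤ h ≤ 2^m`. -/
theorem gamma_symm (m h : ℕ) (hh : h ≤ 2 ^ m) : gamma h m = gamma (2 ^ m - h) m := by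
  induction m generalizing h with
  | zero => interval_cases h <;> norm_num [gamma_zero, gamma_one]
  | succ m ih =>
    have hn : (0:ℕ) < 2^m := Nat.pow_pos (by norm_num)
    have h2 : 2^(m+1) = 2*2^m := by ring
    have hg0 : gamma (2^m) m = 1 := by
      rw [ih (2^m) le_rfl, Nat.sub_self, gamma_zero]
    have key : ∀ h, h ≤ 2^m → gamma h (m+1) = gamma (2^(m+1) - h) (m+1) := by
      intro h hh
      match h with
      | 0 =>
        obtain ⟨t, ht⟩ : ∃ t, 2^(m+1) - 0 = t+2 := ⟨2^(m+1)-2, by omega⟩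
        rw [ht, gamma_add_two]
        have hr : (t+2)/2 + 1 = 2^m + 1 := by omega
        rw [hr]
        rw [Finset.sum_eq_single (2^m)]
        · have : t + 2 - 2^m = 2^m := by omega
          rw [this, hg0]; norm_num [gamma_zero]
        · intro b hb hb'
          rw [Finset.mem_range] at hb
          rw [gamma_vanish m (t+2-b) (by omega), mul_zero]
        · intro hb
          exact absurd (Finset.self_mem_range_succ _) hb
      | 1 =>
        rcases Nat.eq_zero_or_pos m with rfl | hm
        · norm_num
        · have hm2 : 2 ≤ 2^m := by
            calc 2 = 2^1 := rfl
            _ ≤ 2^m := Nat.pow_le_pow_right (by norm_num) hm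
          obtain ⟨t, ht⟩ : ∃ t, 2^(m+1) - 1 = t+2 := ⟨2^(m+1)-3, by omega⟩
          rw [ht, gamma_add_two]
          have hr : (t+2)/2 + 1 = 2^m := by omega
          rw [hr]
          rw [Finset.sum_eq_single (2^m - 1)]
          · have e1 : t + 2 - (2^m - 1) = 2^m := by omega
            have e2 : gamma (2^m - 1) m = 1 := by
              rw [ih (2^m - 1) (by omega)]
              have : 2^m - (2^m - 1) = 1 := by omega
              rw [this, gamma_one]
            rw [e1, e2, hg0]; norm_num [gamma_one]
          · intro b hb hb'
            rw [Finset.mem_range] at hb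
            rw [gamma_vanish m (t+2-b) (by omega), mul_zero]
          · intro hb
            rw [Finset.mem_range] at hb
            omega
      | (t+2) =>
        obtain ⟨u, hu⟩ : ∃ u, 2^(m+1) - (t+2) = u+2 := ⟨2^(m+1)-(t+4), by omega⟩
        rw [hu, gamma_add_two, gamma_add_two]
        have hut : u + 2 = 2*2^m - (t+2) := by omega
        set d := 2^m - (t+2) with hd
        have split : ∑ k ∈ Finset.range ((u+2)/2+1), gamma k m * gamma (u+2-k) m
            = (∑ k ∈ Finset.Ico 0 d, gamma k m * gamma (u+2-k) m)
              + ∑ k ∈ Finset.Ico d ((u+2)/2+1), gamma k m * gamma (u+2-k) m := by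
          rw [Finset.range_eq_Ico,
            Finset.sum_Ico_consecutive _ (Nat.zero_le d) (by omega)]
        rw [split]
        have z1 : ∑ k ∈ Finset.Ico 0 d, gamma k m * gamma (u+2-k) m = 0 := by
          apply Finset.sum_eq_zero
          intro k hk
          rw [Finset.mem_Ico] at hk
          rw [gamma_vanish m (u+2-k) (by omega), mul_zero]
        rw [z1, zero_add, Finset.sum_Ico_eq_sum_range]
        have hc : (u+2)/2 + 1 - d = (t+2)/2 + 1 := by omega
        rw [hc]
        apply Finset.sum_congr rfl
        intro k hk
        rw [Finset.mem_range] at hk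
        rw [ih k (by omega), ih (t+2-k) (by omega)]
        have e1 : 2^m - (t+2-k) = d + k := by omega
        have e2 : u + 2 - (d + k) = 2^m - k := by omega
        rw [e1, e2, mul_comm]
    by_cases hc : h ≤ 2^m
    · exact key h hc
    · have h1 := key (2^(m+1)-h) (by omega)
      rw [h1]
      congr 1
      omega
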